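/- Let v ∈ ℂ[x,y] solve the PDE v·v_{xy} − v_x·v_y = σ·v for a data σ ∈ ℂ[x,y]. Assume there exists m ∈ ℕ such that v is divisible by (xy)^m but divisible neither by x^{m+1}y^m nor by x^m y^{m+1}. Then σ is divisible by (xy)^m; moreover, if u, γ ∈ ℂ[x,y] are the polynomials with v = (xy)^m·u and σ = (xy)^m·γ, then u solves the PDE u·u_{xy} − u_x·u_y = γ·u for the data γ. -/

import Mathlib

open MvPolynomial

/-- A bivariate polynomial `u ∈ ℂ[x,y]` solves the PDE
`u·u_{xy} − u_x·u_y = σ·u` for the data `σ`, where `x` is the variable `0` and `y` is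
the variable `1`. -/
def SolvesPDE (σ u : MvPolynomial (Fin 2) ℂ) : Prop :=
  u * pderiv 0 (pderiv 1 u) - pderiv 0 u * pderiv 1 u = σ * u

/-- The Hirota-type bilinear operator. -/
noncomputable def Lop (u : MvPolynomial (Fin 2) ℂ) : MvPolynomial (Fin 2) ℂ :=
  u * pderiv 0 (pderiv 1 u) - pderiv 0 u * pderiv 1 u

lemma Lop_mul (f g : MvPolynomial (Fin 2) ℂ) :
    Lop (f * g) = f ^ 2 * Lop g + g ^ 2 * Lop f := by
  simp only [Lop, pderiv_mul, map_add]
  ring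

lemma Lop_XX : Lop (X 0 * X 1 : MvPolynomial (Fin 2) ℂ) = 0 := by
  simp only [Lop, pderiv_mul, pderiv_X_self, pderiv_X_of_ne (show (0:Fin 2) ≠ 1 by decide),
    pderiv_X_of_ne (show (1:Fin 2) ≠ 0 by decide), map_add, map_mul, map_zero, map_one, Derivation.map_one_eq_zero]
  ring

lemma Lop_XX_pow (m : ℕ) : Lop ((X 0 * X 1 : MvPolynomial (Fin 2) ℂ) ^ m) = 0 := by
  induction m with
  | zero => simp [Lop]
  | succ n ih =>
    rw [pow_succ, Lop_mul, ih, Lop_XX]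
    ring

lemma prime_X0 : Prime (X 0 : MvPolynomial (Fin 2) ℂ) := by
  rw [← MulEquiv.prime_iff (finSuccEquiv ℂ 1).toMulEquiv]
  simpa [finSuccEquiv_X_zero] using Polynomial.prime_X (R := MvPolynomial (Fin 1) ℂ)

lemma prime_X1 : Prime (X 1 : MvPolynomial (Fin 2) ℂ) := by
  rw [← MulEquiv.prime_iff (renameEquiv ℂ (Equiv.swap (0 : Fin 2) 1)).toMulEquiv]
  simpa using prime_X0

lemma X1_not_dvd_X0 : ¬ (X 1 : MvPolynomial (Fin 2) ℂ) ∣ X 0 := by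
  intro ⟨c, hc⟩
  have := congrArg (eval ![1, 0]) hc
  simp at this

/-- Let `v` solve the PDE for the data `σ`, and assume `v` is divisible
by `(xy)^m` but neither by `x^{m+1}y^m` nor by `x^m y^{m+1}`. Then `σ` is divisible by
`(xy)^m`, and if `v = (xy)^m·u` and `σ = (xy)^m·γ`, then `u` solves the PDE for the
data `γ`. -/
theorem stmt14 (σ v : MvPolynomial (Fin 2) ℂ) (m : ℕ)
    (hode : SolvesPDE σ v)
    (h1 : (X 0 * X 1) ^ m ∣ v)
    (h2 : ¬ (X 0 ^ (m + 1) * X 1 ^ m ∣ v))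
    (h3 : ¬ (X 0 ^ m * X 1 ^ (m + 1) ∣ v)) :
    (X 0 * X 1) ^ m ∣ σ ∧
      ∀ u γ : MvPolynomial (Fin 2) ℂ,
        v = (X 0 * X 1) ^ m * u → σ = (X 0 * X 1) ^ m * γ → SolvesPDE γ u := by
  set P : MvPolynomial (Fin 2) ℂ := (X 0 * X 1) ^ m with hP
  have hPne : P ≠ 0 := pow_ne_zero _ (mul_ne_zero (X_ne_zero 0) (X_ne_zero 1))
  -- key identity for any factorization v = P * u
  have key : ∀ u : MvPolynomial (Fin 2) ℂ, v = P * u → P ^ 2 * Lop u = σ * (P * u) := by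
    intro u hu
    have : Lop v = σ * v := hode
    rw [hu, Lop_mul, Lop_XX_pow, mul_zero, add_zero] at this
    linear_combination this
  constructor
  · obtain ⟨u, hu⟩ := h1
    have hx : ¬ (X 0 : MvPolynomial (Fin 2) ℂ) ∣ u := by
      rintro ⟨w, rfl⟩
      exact h2 ⟨X 1 ^ 0 * w, by rw [hu]; ring⟩
    have hy : ¬ (X 1 : MvPolynomial (Fin 2) ℂ) ∣ u := by
      rintro ⟨w, rfl⟩
      exact h3 ⟨w, by rw [hu]; ring⟩
    have hk := key u hu
    have hcan : P * Lop u = σ * u :=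
      mul_left_cancel₀ hPne (by linear_combination hk)
    have hσu : P ∣ σ * u := ⟨Lop u, hcan.symm⟩
    rw [hP, mul_pow] at hσu
    have hx0 : (X 0 : MvPolynomial (Fin 2) ℂ) ^ m ∣ σ :=
      prime_X0.pow_dvd_of_dvd_mul_right m hx (dvd_trans (dvd_mul_right _ _) hσu)
    obtain ⟨τ, hτ⟩ := hx0
    have hy0 : (X 1 : MvPolynomial (Fin 2) ℂ) ^ m ∣ σ * u :=
      dvd_trans (dvd_mul_left _ _) hσu
    have hy1 : (X 1 : MvPolynomial (Fin 2) ℂ) ^ m ∣ σ :=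
      prime_X1.pow_dvd_of_dvd_mul_right m hy hy0
    rw [hτ] at hy1
    have hx0m : ¬ (X 1 : MvPolynomial (Fin 2) ℂ) ∣ X 0 ^ m :=
      fun h => X1_not_dvd_X0 (prime_X1.dvd_of_dvd_pow h)
    have hy2 : (X 1 : MvPolynomial (Fin 2) ℂ) ^ m ∣ τ :=
      prime_X1.pow_dvd_of_dvd_mul_left m hx0m hy1
    obtain ⟨γ, rfl⟩ := hy2
    exact ⟨γ, by rw [hτ, hP, mul_pow]; ring⟩
  · intro u γ hu hγ
    have hk := key u hu
    rw [hγ] at hk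
    have : P ^ 2 * Lop u = P ^ 2 * (γ * u) := by linear_combination hk
    have := mul_left_cancel₀ (pow_ne_zero 2 hPne) this
    unfold SolvesPDE
    rw [show γ * u = Lop u from this.symm]
    rfl
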